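/- For any graphs G and H, γ_gr(G ⊠ H) ≥ γ_gr(G)·γ_gr(H). -/

import Mathlib

open SimpleGraph

/-- The closed neighborhood of a vertex. -/
def closedNbhd {V : Type*} (G : SimpleGraph V) (v : V) : Set V :=
  insert v (G.neighborSet v)

/-- A legal (closed neighborhood) sequence: distinct vertices, each dominating
a vertex not dominated by its predecessors. -/
def IsLegalSeq {V : Type*} (G : SimpleGraph V) (l : List V) : Prop :=
  l.Nodup ∧ ∀ i : Fin l.length, ∃ u, u ∈ closedNbhd G (l.get i) ∧
    ∀ j : Fin l.length, (j : ℕ) < (i : ℕ) → u ∉ closedNbhd G (l.get j)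

/-- A dominating sequence: a legal sequence whose vertex set dominates the graph. -/
def IsDomSeq {V : Type*} (G : SimpleGraph V) (l : List V) : Prop :=
  IsLegalSeq G l ∧ ∀ v : V, ∃ u ∈ l, v ∈ closedNbhd G u

/-- The Grundy domination number: maximum length of a dominating sequence. -/
noncomputable def grundyDomNum {V : Type*} (G : SimpleGraph V) : ℕ :=
  sSup {n | ∃ l : List V, IsDomSeq G l ∧ l.length = n}

/-- A legal open neighborhood sequence. -/
def IsLegalOpenSeq {V : Type*} (G : SimpleGraph V) (l : List V) : Prop :=
  l.Nodup ∧ ∀ i : Fin l.length, ∃ u, u ∈ G.neighborSet (l.get i) ∧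
    ∀ j : Fin l.length, (j : ℕ) < (i : ℕ) → u ∉ G.neighborSet (l.get j)

/-- A total dominating sequence. -/
def IsTotalDomSeq {V : Type*} (G : SimpleGraph V) (l : List V) : Prop :=
  IsLegalOpenSeq G l ∧ ∀ v : V, ∃ u ∈ l, v ∈ G.neighborSet u

/-- The Grundy total domination number. -/
noncomputable def grundyTotalDomNum {V : Type*} (G : SimpleGraph V) : ℕ :=
  sSup {n | ∃ l : List V, IsTotalDomSeq G l ∧ l.length = n}

/-- The edge clique cover number: minimum size of a family of cliques covering all edges. -/
noncomputable def edgeCliqueCoverNum {V : Type*} (G : SimpleGraph V) : ℕ :=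
  sInf {n | ∃ C : Finset (Set V), C.card = n ∧ (∀ Q ∈ C, G.IsClique Q) ∧
    ∀ u v : V, G.Adj u v → ∃ Q ∈ C, u ∈ Q ∧ v ∈ Q}

/-- The independence number. -/
noncomputable def indepNum {V : Type*} (G : SimpleGraph V) : ℕ :=
  sSup {n | ∃ s : Finset V, (s : Set V).Pairwise (fun u v => ¬ G.Adj u v) ∧ s.card = n}

/-- The lexicographic product of simple graphs. -/
def lexProd {V W : Type*} (G : SimpleGraph V) (H : SimpleGraph W) : SimpleGraph (V × W) where
  Adj x y := G.Adj x.1 y.1 ∨ (x.1 = y.1 ∧ H.Adj x.2 y.2)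
  symm := by
    constructor
    rintro x y (h | ⟨e, h⟩)
    · exact Or.inl h.symm
    · exact Or.inr ⟨e.symm, h.symm⟩
  loopless := by
    constructor
    rintro x (h | ⟨_, h⟩)
    · exact G.loopless.irrefl _ h
    · exact H.loopless.irrefl _ h

/-- The strong product of simple graphs. -/
def strongProd {V W : Type*} (G : SimpleGraph V) (H : SimpleGraph W) : SimpleGraph (V × W) where
  Adj x y := x ≠ y ∧ (x.1 = y.1 ∨ G.Adj x.1 y.1) ∧ (x.2 = y.2 ∨ H.Adj x.2 y.2)
  symm := by
    constructor
    rintro x y ⟨hne, h1, h2⟩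
    refine ⟨hne.symm, ?_, ?_⟩
    · rcases h1 with h | h
      · exact Or.inl h.symm
      · exact Or.inr h.symm
    · rcases h2 with h | h
      · exact Or.inl h.symm
      · exact Or.inr h.symm
  loopless := ⟨fun x h => h.1 rfl⟩

/-- The direct (tensor) product of simple graphs. -/
def directProd {V W : Type*} (G : SimpleGraph V) (H : SimpleGraph W) : SimpleGraph (V × W) where
  Adj x y := G.Adj x.1 y.1 ∧ H.Adj x.2 y.2
  symm := ⟨fun _ _ h => ⟨h.1.symm, h.2.symm⟩⟩
  loopless := ⟨fun x h => G.loopless.irrefl _ h.1⟩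

/-- The boundary of a set of vertices. -/
def boundarySet {V : Type*} (G : SimpleGraph V) (S : Set V) : Set V :=
  {u | u ∉ S ∧ ∃ s ∈ S, G.Adj u s}

/-- `aVal G l` is the number of entries of `l` not adjacent to any earlier entry. -/
def aVal {V : Type*} (G : SimpleGraph V) [DecidableRel G.Adj] (l : List V) : ℕ :=
  (Finset.univ.filter (fun i : Fin l.length =>
    ∀ j : Fin l.length, (j : ℕ) < (i : ℕ) → ¬ G.Adj (l.get j) (l.get i))).card


lemma mem_closedNbhd_strongProd {V W : Type*} (G : SimpleGraph V) (H : SimpleGraph W)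
    (a : V) (b : W) (x : V × W) :
    x ∈ closedNbhd (strongProd G H) (a, b) ↔
      x.1 ∈ closedNbhd G a ∧ x.2 ∈ closedNbhd H b := by
  obtain ⟨x1, x2⟩ := x
  simp only [closedNbhd, Set.mem_insert_iff, SimpleGraph.mem_neighborSet, strongProd,
    Prod.mk.injEq, ne_eq]
  constructor
  · rintro (⟨h1, h2⟩ | ⟨hne, h1, h2⟩)
    · exact ⟨Or.inl h1, Or.inl h2⟩
    · refine ⟨?_, ?_⟩
      · rcases h1 with h | h
        · exact Or.inl h.symm
        · exact Or.inr h
      · rcases h2 with h | h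
        · exact Or.inl h.symm
        · exact Or.inr h
  · rintro ⟨h1, h2⟩
    by_cases he : x1 = a ∧ x2 = b
    · exact Or.inl he
    · refine Or.inr ⟨?_, ?_, ?_⟩
      · intro h; exact he ⟨h.1.symm, h.2.symm⟩
      · rcases h1 with h | h
        · exact Or.inl h.symm
        · exact Or.inr h
      · rcases h2 with h | h
        · exact Or.inl h.symm
        · exact Or.inr h

lemma bddAbove_domSeq {V : Type*} [Fintype V] (G : SimpleGraph V) :
    BddAbove {n | ∃ l : List V, IsDomSeq G l ∧ l.length = n} := by
  refine ⟨Fintype.card V, ?_⟩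
  rintro n ⟨l, hl, rfl⟩
  exact hl.1.1.length_le_card

lemma strongProd_domSeq {V W : Type*} (G : SimpleGraph V) (H : SimpleGraph W)
    (l : List V) (m : List W) (hl : IsDomSeq G l) (hm : IsDomSeq H m)
    (hM : 0 < m.length) :
    ∃ L : List (V × W), IsDomSeq (strongProd G H) L ∧
      L.length = l.length * m.length := by
  set K := l.length with hK
  set M := m.length with hMdef
  have hdiv : ∀ n : Fin (K * M), n / M < K := by
    intro n
    exact Nat.div_lt_of_lt_mul (by simpa [Nat.mul_comm] using n.isLt)
  have hmod : ∀ n : Fin (K * M), n % M < M := fun n => Nat.mod_lt _ hM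
  set f : Fin (K * M) → V × W :=
    fun n => (l.get ⟨n / M, hdiv n⟩, m.get ⟨n % M, hmod n⟩) with hf
  refine ⟨List.ofFn f, ⟨⟨?_, ?_⟩, ?_⟩, by simp⟩
  · -- Nodup
    refine List.nodup_ofFn.mpr ?_
    intro n n' h
    have h1 : (n : ℕ) / M = (n' : ℕ) / M := by
      have := congrArg Prod.fst h
      have := (List.nodup_iff_injective_get.mp hl.1.1) this
      exact congrArg Fin.val this
    have h2 : (n : ℕ) % M = (n' : ℕ) % M := by
      have := congrArg Prod.snd h
      have := (List.nodup_iff_injective_get.mp hm.1.1) this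
      exact congrArg Fin.val this
    have : (n : ℕ) = (n' : ℕ) := by
      rw [← Nat.div_add_mod (n : ℕ) M, ← Nat.div_add_mod (n' : ℕ) M, h1, h2]
    exact Fin.ext this
  · -- legal
    intro i
    have hlen : (List.ofFn f).length = K * M := by simp
    set i' : Fin (K * M) := Fin.cast hlen i with hi'
    obtain ⟨uG, huG, huGmin⟩ := hl.1.2 ⟨i' / M, hdiv i'⟩
    obtain ⟨uH, huH, huHmin⟩ := hm.1.2 ⟨i' % M, hmod i'⟩
    refine ⟨(uG, uH), ?_, ?_⟩
    · have hgi : (List.ofFn f).get i = f i' := by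
        rw [List.get_ofFn]
      rw [hgi, hf]
      exact (mem_closedNbhd_strongProd G H _ _ _).mpr ⟨huG, huH⟩
    · intro j hj
      set j' : Fin (K * M) := Fin.cast hlen j with hj'
      have hgj : (List.ofFn f).get j = f j' := by rw [List.get_ofFn]
      rw [hgj, hf]
      rw [mem_closedNbhd_strongProd]
      have hjilt : (j' : ℕ) < (i' : ℕ) := hj
      have hdivle : (j' : ℕ) / M ≤ (i' : ℕ) / M := Nat.div_le_div_right (le_of_lt hjilt)
      rcases lt_or_eq_of_le hdivle with hcase | hcase
      · intro ⟨h1, _⟩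
        exact huGmin ⟨j' / M, hdiv j'⟩ hcase h1
      · intro ⟨_, h2⟩
        have hmodlt : (j' : ℕ) % M < (i' : ℕ) % M := by
          have e1 := Nat.div_add_mod (j' : ℕ) M
          have e2 := Nat.div_add_mod (i' : ℕ) M
          rw [hcase] at e1
          omega
        exact huHmin ⟨j' % M, hmod j'⟩ hmodlt h2
  · -- dominating
    rintro ⟨a, b⟩
    obtain ⟨u, hu, hau⟩ := hl.2 a
    obtain ⟨w, hw, hbw⟩ := hm.2 b
    obtain ⟨iG, rfl⟩ := List.mem_iff_get.mp hu
    obtain ⟨iH, rfl⟩ := List.mem_iff_get.mp hw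
    have hidx : (iG : ℕ) * M + (iH : ℕ) < K * M := by
      have h1 : (iG : ℕ) < K := iG.isLt
      have h2 : (iH : ℕ) < M := iH.isLt
      calc (iG : ℕ) * M + (iH : ℕ) < (iG : ℕ) * M + M := by omega
        _ = ((iG : ℕ) + 1) * M := by ring
        _ ≤ K * M := Nat.mul_le_mul_right M h1
    refine ⟨f ⟨(iG : ℕ) * M + (iH : ℕ), hidx⟩, ?_, ?_⟩
    · exact List.mem_ofFn.mpr ⟨_, rfl⟩
    · have hd : ((iG : ℕ) * M + (iH : ℕ)) / M = (iG : ℕ) := by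
        rw [Nat.add_comm, Nat.add_mul_div_right _ _ hM, Nat.div_eq_of_lt iH.isLt,
          Nat.zero_add]
      have hm2 : ((iG : ℕ) * M + (iH : ℕ)) % M = (iH : ℕ) := by
        rw [Nat.add_comm, Nat.add_mul_mod_self_right, Nat.mod_eq_of_lt iH.isLt]
      have hfeq : f ⟨(iG : ℕ) * M + (iH : ℕ), hidx⟩ = (l.get iG, m.get iH) := by
        have h1 : (⟨((iG : ℕ) * M + (iH : ℕ)) / M, hdiv ⟨_, hidx⟩⟩ : Fin K) = iG :=
          Fin.ext hd
        have h2 : (⟨((iG : ℕ) * M + (iH : ℕ)) % M, hmod ⟨_, hidx⟩⟩ : Fin M) = iH :=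
          Fin.ext hm2
        rw [hf]
        dsimp only
        rw [h1, h2]
      rw [hfeq]
      exact (mem_closedNbhd_strongProd G H _ _ _).mpr ⟨hau, hbw⟩

theorem stmt_16 {V W : Type*} [Fintype V] [Fintype W]
    (G : SimpleGraph V) (H : SimpleGraph W) :
    grundyDomNum (strongProd G H) ≥ grundyDomNum G * grundyDomNum H := by
  classical
  by_cases hGne : {n | ∃ l : List V, IsDomSeq G l ∧ l.length = n}.Nonempty
  swap
  · have h0 : grundyDomNum G = 0 := by
      unfold grundyDomNum
      rw [Set.not_nonempty_iff_eq_empty.mp hGne]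
      exact csSup_empty
    rw [h0, Nat.zero_mul]
    exact Nat.zero_le _
  by_cases hHne : {n | ∃ l : List W, IsDomSeq H l ∧ l.length = n}.Nonempty
  swap
  · have h0 : grundyDomNum H = 0 := by
      unfold grundyDomNum
      rw [Set.not_nonempty_iff_eq_empty.mp hHne]
      exact csSup_empty
    rw [h0, Nat.mul_zero]
    exact Nat.zero_le _
  obtain ⟨l, hl, hllen⟩ := Nat.sSup_mem hGne (bddAbove_domSeq G)
  obtain ⟨m, hm, hmlen⟩ := Nat.sSup_mem hHne (bddAbove_domSeq H)
  rcases Nat.eq_zero_or_pos m.length with hM | hM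
  · have h0 : grundyDomNum H = 0 := by
      unfold grundyDomNum
      omega
    rw [h0, Nat.mul_zero]
    exact Nat.zero_le _
  obtain ⟨L, hL, hLlen⟩ := strongProd_domSeq G H l m hl hm hM
  have : grundyDomNum G * grundyDomNum H ≤ grundyDomNum (strongProd G H) := by
    unfold grundyDomNum
    refine le_csSup (bddAbove_domSeq _) ?_
    exact ⟨L, hL, by rw [hLlen, hllen, hmlen]⟩
  exact this
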